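/- For every positive integer N, the polynomial p_N is strictly decreasing on the interval (0, (N+1)/(N+2)) and strictly increasing on the interval ((N+1)/(N+2), 1). -/

import Mathlib

/-- The polynomial `p_N(y) = 1 - (N+1)² y^N + N(2N+3) y^{N+1} - N(N+1) y^{N+2}`. -/
noncomputable def pN (N : ℕ) (y : ℝ) : ℝ :=
  1 - ((N : ℝ) + 1) ^ 2 * y ^ N + (N : ℝ) * (2 * (N : ℝ) + 3) * y ^ (N + 1)
    - (N : ℝ) * ((N : ℝ) + 1) * y ^ (N + 2)

lemma hasDerivAt_pN (M : ℕ) (y : ℝ) :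
    HasDerivAt (pN (M + 1))
      (-(((M : ℝ) + 1) * ((M : ℝ) + 2)) * y ^ M *
        ((((M : ℝ) + 3) * y - ((M : ℝ) + 2)) * (y - 1))) y := by
  have e : pN (M + 1) = fun y : ℝ =>
      1 - ((M : ℝ) + 2) ^ 2 * y ^ (M + 1)
        + ((M : ℝ) + 1) * (2 * (M : ℝ) + 5) * y ^ (M + 2)
        - ((M : ℝ) + 1) * ((M : ℝ) + 2) * y ^ (M + 3) := by
    funext y
    simp only [pN]
    push_cast
    ring_nf
  rw [e]
  have h1 : HasDerivAt (fun y : ℝ => y ^ (M + 1)) ((↑(M + 1) : ℝ) * y ^ M) y := by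
    simpa using hasDerivAt_pow (M + 1) y
  have h2 : HasDerivAt (fun y : ℝ => y ^ (M + 2)) ((↑(M + 2) : ℝ) * y ^ (M + 1)) y := by
    simpa using hasDerivAt_pow (M + 2) y
  have h3 : HasDerivAt (fun y : ℝ => y ^ (M + 3)) ((↑(M + 3) : ℝ) * y ^ (M + 2)) y := by
    simpa using hasDerivAt_pow (M + 3) y
  have h := (((hasDerivAt_const y (1 : ℝ)).sub
      (h1.const_mul (((M : ℝ) + 2) ^ 2))).add
      (h2.const_mul (((M : ℝ) + 1) * (2 * (M : ℝ) + 5)))).sub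
      (h3.const_mul (((M : ℝ) + 1) * ((M : ℝ) + 2)))
  refine h.congr_deriv ?_
  push_cast
  ring

theorem stmt5 (N : ℕ) (hN : 1 ≤ N) :
    StrictAntiOn (pN N) (Set.Ioo (0 : ℝ) (((N : ℝ) + 1) / ((N : ℝ) + 2))) ∧
    StrictMonoOn (pN N) (Set.Ioo (((N : ℝ) + 1) / ((N : ℝ) + 2)) 1) := by
  obtain ⟨M, rfl⟩ : ∃ M, N = M + 1 := ⟨N - 1, (Nat.succ_pred_eq_of_pos hN).symm⟩
  have hcont : Continuous (pN (M + 1)) := by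
    unfold pN; continuity
  have hden : (0 : ℝ) < (M : ℝ) + 1 + 2 := by positivity
  have hMofs : ((M : ℝ) + 1 + 1) / ((M : ℝ) + 1 + 2) < 1 := by
    rw [div_lt_one hden]; linarith
  constructor
  · apply strictAntiOn_of_deriv_neg (convex_Ioo _ _) hcont.continuousOn
    intro x hx
    rw [interior_Ioo] at hx
    obtain ⟨hx0, hx1⟩ := hx
    push_cast at hx0 hx1
    rw [(hasDerivAt_pN M x).deriv]
    have hxlt : ((M : ℝ) + 3) * x - ((M : ℝ) + 2) < 0 := by
      have := (lt_div_iff₀ hden).mp hx1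
      push_cast at this ⊢
      linarith
    have hx1' : x - 1 < 0 := by
      have : x < 1 := lt_trans hx1 hMofs
      linarith
    have hp : 0 < x ^ M := pow_pos hx0 M
    have hprod : 0 < (((M : ℝ) + 3) * x - ((M : ℝ) + 2)) * (x - 1) :=
      mul_pos_of_neg_of_neg hxlt hx1'
    have hc : 0 < ((M : ℝ) + 1) * ((M : ℝ) + 2) := by positivity
    nlinarith [mul_pos hp hprod, mul_pos hc (mul_pos hp hprod)]
  · apply strictMonoOn_of_deriv_pos (convex_Ioo _ _) hcont.continuousOn
    intro x hx
    rw [interior_Ioo] at hx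
    obtain ⟨hx0, hx1⟩ := hx
    push_cast at hx0 hx1
    rw [(hasDerivAt_pN M x).deriv]
    have hxgt : 0 < ((M : ℝ) + 3) * x - ((M : ℝ) + 2) := by
      have := (div_lt_iff₀ hden).mp hx0
      push_cast at this ⊢
      linarith
    have hx1' : x - 1 < 0 := by linarith
    have hxpos : 0 < x := by
      have : (0 : ℝ) < ((M : ℝ) + 1 + 1) / ((M : ℝ) + 1 + 2) := by positivity
      linarith
    have hp : 0 < x ^ M := pow_pos hxpos M
    have hprod : (((M : ℝ) + 3) * x - ((M : ℝ) + 2)) * (x - 1) < 0 :=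
      mul_neg_of_pos_of_neg hxgt hx1'
    have hc : 0 < ((M : ℝ) + 1) * ((M : ℝ) + 2) := by positivity
    nlinarith [mul_neg_of_pos_of_neg hp hprod, mul_pos hc hp]
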